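/- In a right proper model category whose weak equivalences are closed under finite products, if α : X → X' and β : Y → Y' are weak equivalences, then the induced function π₀H(X,Y) → π₀H(X',Y') on path components of cocycle categories, given by postcomposition with α and β, is a bijection. -/

import Mathlib

/-!
STATEMENT 1: In a right proper model category whose weak equivalences are closed under
finite products, if `α : X ⟶ X'` and `β : Y ⟶ Y'` are weak equivalences, then the induced
function `π₀H(X,Y) → π₀H(X',Y')` given by postcomposition of the two legs of a cocycle
with `α` and `β` is a bijection.
-/

open CategoryTheory CategoryTheory.Limits

universe v u

/-- A (closed) model structure on a category `M` with all finite limits and colimits. -/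
structure ModelStr (M : Type u) [Category.{v} M] : Type (max u v) where
  weq : MorphismProperty M
  fib : MorphismProperty M
  cof : MorphismProperty M
  weq_id : ∀ X : M, weq (𝟙 X)
  /-- CM2, two out of three -/
  weq_comp : ∀ {X Y Z : M} (f : X ⟶ Y) (g : Y ⟶ Z), weq f → weq g → weq (f ≫ g)
  weq_cancel_left : ∀ {X Y Z : M} (f : X ⟶ Y) (g : Y ⟶ Z), weq f → weq (f ≫ g) → weq g
  weq_cancel_right : ∀ {X Y Z : M} (f : X ⟶ Y) (g : Y ⟶ Z), weq g → weq (f ≫ g) → weq f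
  /-- CM3: the three classes are closed under retracts. -/
  retracts : ∀ {X Y X' Y' : M} (f : X ⟶ Y) (g : X' ⟶ Y') (i : X ⟶ X') (r : X' ⟶ X)
    (j : Y ⟶ Y') (s : Y' ⟶ Y), i ≫ r = 𝟙 X → j ≫ s = 𝟙 Y → i ≫ g = f ≫ j → g ≫ s = r ≫ f →
    (weq g → weq f) ∧ (fib g → fib f) ∧ (cof g → cof f)
  /-- CM4: lifting -/
  lifting : ∀ {A B X Y : M} (i : A ⟶ B) (p : X ⟶ Y) (u : A ⟶ X) (v : B ⟶ Y),
    cof i → fib p → (weq i ∨ weq p) → u ≫ p = i ≫ v →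
    ∃ l : B ⟶ X, i ≫ l = u ∧ l ≫ p = v
  /-- CM5: factorizations -/
  fact_cof_triv_fib : ∀ {X Y : M} (f : X ⟶ Y),
    ∃ (Z : M) (i : X ⟶ Z) (q : Z ⟶ Y), cof i ∧ fib q ∧ weq q ∧ i ≫ q = f
  fact_triv_cof_fib : ∀ {X Y : M} (f : X ⟶ Y),
    ∃ (Z : M) (j : X ⟶ Z) (p : Z ⟶ Y), cof j ∧ weq j ∧ fib p ∧ j ≫ p = f

/-- Right properness: weak equivalences are stable under pullback along fibrations. -/
def ModelStr.RightProper {M : Type u} [Category.{v} M] (S : ModelStr M) : Prop :=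
  ∀ {P A B C : M} (fst : P ⟶ A) (snd : P ⟶ B) (f : A ⟶ C) (g : B ⟶ C),
    IsPullback fst snd f g → S.weq f → S.fib g → S.weq snd

/-- The weak equivalences are closed under finite products: `f × 1` and `1 × f` are
weak equivalences whenever `f` is. -/
def ModelStr.WeqClosedUnderProducts {M : Type u} [Category.{v} M] [HasBinaryProducts M]
    (S : ModelStr M) : Prop :=
  ∀ {A B : M} (f : A ⟶ B) (Z : M), S.weq f →
    S.weq (Limits.prod.map f (𝟙 Z)) ∧ S.weq (Limits.prod.map (𝟙 Z) f)

/-- A cocycle from `X` to `Y`: a pair of maps `X ⟵ Z ⟶ Y` whose first leg is a weak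
equivalence. -/
structure Cocycle {M : Type u} [Category.{v} M] (W : MorphismProperty M) (X Y : M) :
    Type (max u v) where
  Z : M
  f : Z ⟶ X
  g : Z ⟶ Y
  hf : W f

/-- A morphism of cocycles `(f,g) → (f',g')` is a map of the middle objects commuting with
both legs.  Path components of the cocycle category are the quotient by the equivalence
relation generated by this relation. -/
def cocycleRel {M : Type u} [Category.{v} M] (W : MorphismProperty M) (X Y : M)
    (c c' : Cocycle W X Y) : Prop :=
  ∃ α : c.Z ⟶ c'.Z, α ≫ c'.f = c.f ∧ α ≫ c'.g = c.g

/-- `π₀H(X,Y)`, the path components of the cocycle category. -/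
def pi0H {M : Type u} [Category.{v} M] (W : MorphismProperty M) (X Y : M) :=
  Quot (cocycleRel W X Y)

/-- The function `π₀H(X,Y) → π₀H(X',Y')` induced by weak equivalences `α : X ⟶ X'`,
`β : Y ⟶ Y'` (postcomposition of both legs of a cocycle). -/
def pushCocycle {M : Type u} [Category.{v} M] (S : ModelStr M)
    {X X' Y Y' : M} (α : X ⟶ X') (β : Y ⟶ Y') (hα : S.weq α) :
    pi0H S.weq X Y → pi0H S.weq X' Y' :=
  Quot.lift
    (fun c => Quot.mk _ ⟨c.Z, c.f ≫ α, c.g ≫ β, S.weq_comp c.f α c.hf hα⟩)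
    (by
      rintro c c' ⟨a, h1, h2⟩
      exact Quot.sound ⟨a, by rw [← Category.assoc, h1], by rw [← Category.assoc, h2]⟩)


section Aux

variable {M : Type u} [Category.{v} M] [HasFiniteLimits M] [HasFiniteColimits M]

lemma weq_prodMap (S : ModelStr M) (hprod : S.WeqClosedUnderProducts)
    {X X' Y Y' : M} (α : X ⟶ X') (β : Y ⟶ Y') (hα : S.weq α) (hβ : S.weq β) :
    S.weq (Limits.prod.map α β) := by
  have h1 := (hprod α Y hα).1
  have h2 := (hprod β X' hβ).2
  have h3 : Limits.prod.map α (𝟙 Y) ≫ Limits.prod.map (𝟙 X') β = Limits.prod.map α β := by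
    rw [prod.map_map, Category.comp_id, Category.id_comp]
  rw [← h3]
  exact S.weq_comp _ _ h1 h2

/-- A (trivial cofibration, fibration) factorization of a map. -/
structure FactData (S : ModelStr M) {A B : M} (φ : A ⟶ B) : Type (max u v) where
  W : M
  j : A ⟶ W
  p : W ⟶ B
  hjc : S.cof j
  hjw : S.weq j
  hp : S.fib p
  fac : j ≫ p = φ

noncomputable def factOf (S : ModelStr M) {A B : M} (φ : A ⟶ B) : FactData S φ := by
  have h := S.fact_triv_cof_fib φ
  exact ⟨h.choose, h.choose_spec.choose, h.choose_spec.choose_spec.choose,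
    h.choose_spec.choose_spec.choose_spec.1,
    h.choose_spec.choose_spec.choose_spec.2.1,
    h.choose_spec.choose_spec.choose_spec.2.2.1,
    h.choose_spec.choose_spec.choose_spec.2.2.2⟩

variable (S : ModelStr M) {X X' Y Y' : M} (α : X ⟶ X') (β : Y ⟶ Y')

/-- The pulled-back cocycle over `(X, Y)` obtained from a cocycle over `(X', Y')`
together with a chosen factorization of its pairing into `X' ⨯ Y'`. -/
noncomputable def pbC (hproper : S.RightProper) (hprod : S.WeqClosedUnderProducts)
    (hα : S.weq α) (hβ : S.weq β)
    (c : Cocycle S.weq X' Y') (F : FactData S (prod.lift c.f c.g)) :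
    Cocycle S.weq X Y where
  Z := pullback (Limits.prod.map α β) F.p
  f := pullback.fst _ _ ≫ Limits.prod.fst
  g := pullback.fst _ _ ≫ Limits.prod.snd
  hf := by
    have hab : S.weq (Limits.prod.map α β) := weq_prodMap S hprod α β hα hβ
    have hpi : S.weq (pullback.snd (Limits.prod.map α β) F.p) :=
      hproper _ _ _ _ (IsPullback.of_hasPullback _ _) hab F.hp
    have hp1 : S.weq (F.p ≫ Limits.prod.fst) := by
      refine S.weq_cancel_left F.j _ F.hjw ?_
      rw [← Category.assoc, F.fac, prod.lift_fst]
      exact c.hf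
    have key : (pullback.fst (Limits.prod.map α β) F.p ≫ Limits.prod.fst) ≫ α =
        pullback.snd (Limits.prod.map α β) F.p ≫ (F.p ≫ Limits.prod.fst) := by
      rw [Category.assoc, ← prod.map_fst α β, ← Category.assoc, pullback.condition,
        Category.assoc]
    refine S.weq_cancel_right _ α hα ?_
    rw [key]
    exact S.weq_comp _ _ hpi hp1

lemma pbC_rel (hproper : S.RightProper) (hprod : S.WeqClosedUnderProducts)
    (hα : S.weq α) (hβ : S.weq β)
    {c d : Cocycle S.weq X' Y'} (F : FactData S (prod.lift c.f c.g))
    (G : FactData S (prod.lift d.f d.g)) (h : cocycleRel S.weq X' Y' c d) :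
    cocycleRel S.weq X Y (pbC S α β hproper hprod hα hβ c F)
      (pbC S α β hproper hprod hα hβ d G) := by
  obtain ⟨θ, h1, h2⟩ := h
  have hθ : θ ≫ prod.lift d.f d.g = prod.lift c.f c.g := by
    rw [prod.comp_lift, h1, h2]
  obtain ⟨L, hL1, hL2⟩ := S.lifting F.j G.p (θ ≫ G.j) F.p F.hjc G.hp (Or.inl F.hjw)
    (by rw [Category.assoc, G.fac, hθ, F.fac])
  refine ⟨pullback.lift (pullback.fst _ _) (pullback.snd _ _ ≫ L) ?_, ?_, ?_⟩
  · exact pullback.condition.trans ((congrArg (pullback.snd _ _ ≫ ·) hL2).symm.trans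
      (Category.assoc _ _ _).symm)
  · show _ ≫ pullback.fst _ _ ≫ Limits.prod.fst = pullback.fst _ _ ≫ Limits.prod.fst
    exact (Category.assoc _ _ _).symm.trans (congrArg (· ≫ Limits.prod.fst) (pullback.lift_fst _ _ _))
  · show _ ≫ pullback.fst _ _ ≫ Limits.prod.snd = pullback.fst _ _ ≫ Limits.prod.snd
    exact (Category.assoc _ _ _).symm.trans (congrArg (· ≫ Limits.prod.snd) (pullback.lift_fst _ _ _))

/-- Pushing a cocycle forward along `α, β`. -/
def pushC (hα : S.weq α) (c : Cocycle S.weq X Y) : Cocycle S.weq X' Y' :=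
  ⟨c.Z, c.f ≫ α, c.g ≫ β, S.weq_comp c.f α c.hf hα⟩

lemma rel_self_pb (hproper : S.RightProper) (hprod : S.WeqClosedUnderProducts)
    (hα : S.weq α) (hβ : S.weq β) (c : Cocycle S.weq X Y)
    (F : FactData S (prod.lift (pushC S α β hα c).f (pushC S α β hα c).g)) :
    cocycleRel S.weq X Y c (pbC S α β hproper hprod hα hβ (pushC S α β hα c) F) := by
  have hcond : prod.lift c.f c.g ≫ Limits.prod.map α β = F.j ≫ F.p := by
    rw [F.fac, prod.lift_map]
    rfl
  refine ⟨pullback.lift (prod.lift c.f c.g) F.j hcond, ?_, ?_⟩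
  · show _ ≫ pullback.fst _ _ ≫ Limits.prod.fst = c.f
    exact (Category.assoc _ _ _).symm.trans <| (congrArg (· ≫ Limits.prod.fst) (pullback.lift_fst _ _ hcond)).trans (prod.lift_fst _ _)
  · show _ ≫ pullback.fst _ _ ≫ Limits.prod.snd = c.g
    exact (Category.assoc _ _ _).symm.trans <| (congrArg (· ≫ Limits.prod.snd) (pullback.lift_fst _ _ hcond)).trans (prod.lift_snd _ _)

lemma pb_push_eq (hproper : S.RightProper) (hprod : S.WeqClosedUnderProducts)
    (hα : S.weq α) (hβ : S.weq β) (c : Cocycle S.weq X' Y')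
    (F : FactData S (prod.lift c.f c.g)) :
    Quot.mk (cocycleRel S.weq X' Y')
        (pushC S α β hα (pbC S α β hproper hprod hα hβ c F)) =
      Quot.mk (cocycleRel S.weq X' Y') c := by
  have hp1 : S.weq (F.p ≫ Limits.prod.fst) := by
    refine S.weq_cancel_left F.j _ F.hjw ?_
    rw [← Category.assoc, F.fac, prod.lift_fst]
    exact c.hf
  set w : Cocycle S.weq X' Y' :=
    ⟨F.W, F.p ≫ Limits.prod.fst, F.p ≫ Limits.prod.snd, hp1⟩ with hw
  have r1 : cocycleRel S.weq X' Y' (pushC S α β hα (pbC S α β hproper hprod hα hβ c F)) w := by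
    refine ⟨pullback.snd _ _, ?_, ?_⟩
    · show pullback.snd _ _ ≫ F.p ≫ Limits.prod.fst =
        (pullback.fst _ _ ≫ Limits.prod.fst) ≫ α
      rw [← Category.assoc, ← pullback.condition, Category.assoc, Category.assoc,
        prod.map_fst]
    · show pullback.snd _ _ ≫ F.p ≫ Limits.prod.snd =
        (pullback.fst _ _ ≫ Limits.prod.snd) ≫ β
      rw [← Category.assoc, ← pullback.condition, Category.assoc, Category.assoc,
        prod.map_snd]
  have r2 : cocycleRel S.weq X' Y' c w := by
    refine ⟨F.j, ?_, ?_⟩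
    · show F.j ≫ F.p ≫ Limits.prod.fst = c.f
      rw [← Category.assoc, F.fac, prod.lift_fst]
    · show F.j ≫ F.p ≫ Limits.prod.snd = c.g
      rw [← Category.assoc, F.fac, prod.lift_snd]
  rw [Quot.sound r1, Quot.sound r2]

end Aux

theorem pushCocycle_bijective {M : Type u} [Category.{v} M]
    [HasFiniteLimits M] [HasFiniteColimits M]
    (S : ModelStr M) (hproper : S.RightProper) (hprod : S.WeqClosedUnderProducts)
    {X X' Y Y' : M} (α : X ⟶ X') (β : Y ⟶ Y') (hα : S.weq α) (hβ : S.weq β) :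
    Function.Bijective (pushCocycle S α β hα) := by
  rw [Function.bijective_iff_has_inverse]
  refine ⟨Quot.lift
      (fun c => Quot.mk _ (pbC S α β hproper hprod hα hβ c (factOf S (prod.lift c.f c.g))))
      (fun c d h => Quot.sound (pbC_rel S α β hproper hprod hα hβ _ _ h)), ?_, ?_⟩
  · intro x
    induction x using Quot.ind with
    | _ c =>
      exact (Quot.sound (rel_self_pb S α β hproper hprod hα hβ c _)).symm
  · intro x
    induction x using Quot.ind with
    | _ c =>
      exact pb_push_eq S α β hproper hprod hα hβ c _
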